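/- Let V be a Hilbert space and A : V → V a bounded operator of finite rank m. Then there exist constants C > 0 and ε₀ > 0 such that for all 0 < ε < ε₀, σ_ε(A) ⊆ σ(A) + B(0, C·ε^{1/(m+1)}). -/

import Mathlib

set_option maxHeartbeats 1000000
open Polynomial

lemma nnnorm_multiset_prod' (s : Multiset ℂ) : ‖s.prod‖₊ = (s.map fun a => ‖a‖₊).prod := by
  induction s using Multiset.induction_on with
  | empty => simp
  | cons a s ih => simp [nnnorm_mul, ih]

section Key
variable {V : Type*} [NormedAddCommGroup V] [NormedSpace ℂ V] [CompleteSpace V]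

lemma key_lemma (A : V →L[ℂ] V) (P : ℂ[X]) (n : ℕ) (hP : P.Monic)
    (hdeg : P.natDegree = n) (hn : 0 < n)
    (hPA : Polynomial.aeval A P = 0)
    (hroots : ∀ μ ∈ P.roots, μ ∈ spectrum ℂ A) :
    ∃ C > (0 : ℝ), ∀ ε : ℝ, 0 < ε → ε < 1 →
      ∀ z : ℂ,
        (¬ IsUnit (z • (1 : V →L[ℂ] V) - A) ∨
          ‖Ring.inverse (z • (1 : V →L[ℂ] V) - A)‖ > 1 / ε) →
        ∃ w ∈ spectrum ℂ A, dist z w < C * ε ^ ((1 : ℝ) / n) := by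
  set M : ℝ := ‖A‖ + 2 with hM
  have hM1 : (1 : ℝ) ≤ M := by have := norm_nonneg A; simp only [hM]; linarith
  set K : ℝ := (∑ i ∈ Finset.range (n+1), ‖P.coeff i‖) * (n+1) * M^n + 1 with hK
  have hK1 : (1 : ℝ) ≤ K := by
    have h1 : (0:ℝ) ≤ (∑ i ∈ Finset.range (n+1), ‖P.coeff i‖) * (n+1) * M^n := by
      have h0 : (0:ℝ) ≤ ∑ i ∈ Finset.range (n+1), ‖P.coeff i‖ :=
        Finset.sum_nonneg fun i _ => norm_nonneg _
      have hMn : (0:ℝ) ≤ M ^ n := by positivity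
      positivity
    simp only [hK]; linarith
  have hKpos : (0 : ℝ) < K := by linarith
  refine ⟨K ^ ((1:ℝ)/n), Real.rpow_pos_of_pos hKpos _, ?_⟩
  intro ε hε hε1 z hyp
  have hcomm : ∀ B : V →L[ℂ] V, Commute (z • (1 : V →L[ℂ] V)) B := by
    intro B
    show z • (1 : V →L[ℂ] V) * B = B * (z • 1)
    rw [smul_mul_assoc, one_mul, mul_smul_comm, mul_one]
  set Q : V →L[ℂ] V :=
    ∑ i ∈ Finset.range (n+1), P.coeff i • (∑ j ∈ Finset.range i, z^j • A^(i-1-j)) with hQ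
  have hgeom : ∀ i : ℕ,
      (z • (1 : V →L[ℂ] V) - A) * (∑ j ∈ Finset.range i, z^j • A^(i-1-j))
        = z^i • 1 - A^i := by
    intro i
    have h := (hcomm A).mul_geom_sum₂ i
    simpa [_root_.smul_pow, smul_mul_assoc, one_mul] using h
  have hgeom' : ∀ i : ℕ,
      (∑ j ∈ Finset.range i, z^j • A^(i-1-j)) * (z • (1 : V →L[ℂ] V) - A)
        = z^i • 1 - A^i := by
    intro i
    have h := (hcomm A).geom_sum₂_mul i
    simpa [_root_.smul_pow, smul_mul_assoc, one_mul] using h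
  have hsum1 : ∑ i ∈ Finset.range (n+1), P.coeff i • (z^i • (1 : V →L[ℂ] V) - A^i)
      = P.eval z • 1 := by
    have ha : (0 : V →L[ℂ] V) = ∑ i ∈ Finset.range (n+1), P.coeff i • A^i := by
      rw [← hPA, P.aeval_eq_sum_range, hdeg]
    simp only [smul_sub]
    rw [Finset.sum_sub_distrib, ← ha, sub_zero, P.eval_eq_sum_range, hdeg, Finset.sum_smul]
    simp [smul_smul]
  have hQid : (z • (1 : V →L[ℂ] V) - A) * Q = P.eval z • 1 := by
    rw [hQ, Finset.mul_sum]
    simp_rw [mul_smul_comm, hgeom]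
    exact hsum1
  have hQid' : Q * (z • (1 : V →L[ℂ] V) - A) = P.eval z • 1 := by
    rw [hQ, Finset.sum_mul]
    simp_rw [smul_mul_assoc, hgeom']
    exact hsum1
  have hQKb : ‖z‖ ≤ ‖A‖ + 1 → ‖Q‖ ≤ K := by
    intro hzb
    have hAle : ‖A‖ ≤ M := by simp only [hM]; linarith
    have hzle : ‖z‖ ≤ M := by simp only [hM]; linarith
    have hAk : ∀ k : ℕ, ‖A^k‖ ≤ M^k := by
      intro k
      induction k with
      | zero => rw [pow_zero, pow_zero]; exact ContinuousLinearMap.norm_id_le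
      | succ k ih =>
          rw [pow_succ, pow_succ]
          exact le_trans (norm_mul_le _ _)
            (mul_le_mul ih hAle (norm_nonneg _) (by positivity))
    have hinner : ∀ i ∈ Finset.range (n+1),
        ‖∑ j ∈ Finset.range i, z^j • A^(i-1-j)‖ ≤ (n+1) * M^n := by
      intro i hi
      have hi' : i ≤ n := by
        have := Finset.mem_range.mp hi; omega
      calc ‖∑ j ∈ Finset.range i, z^j • A^(i-1-j)‖
          ≤ ∑ j ∈ Finset.range i, ‖z^j • A^(i-1-j)‖ := norm_sum_le _ _
        _ ≤ ∑ _j ∈ Finset.range i, M^n := by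
            refine Finset.sum_le_sum ?_
            intro j hj
            have hj' : j < i := Finset.mem_range.mp hj
            rw [norm_smul (z^j) (A^(i-1-j)), norm_pow]
            calc ‖z‖^j * ‖A^(i-1-j)‖ ≤ M^j * M^(i-1-j) :=
                mul_le_mul (pow_le_pow_left₀ (norm_nonneg z) hzle j) (hAk _)
                  (norm_nonneg _) (by positivity)
              _ = M^(j + (i-1-j)) := (pow_add M j _).symm
              _ ≤ M^n := pow_le_pow_right₀ hM1 (by omega)
        _ = (i : ℝ) * M^n := by
            rw [Finset.sum_const, Finset.card_range, nsmul_eq_mul]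
        _ ≤ (n+1) * M^n := by
            have hcast : (i:ℝ) ≤ (n:ℝ)+1 := by exact_mod_cast (by omega : i ≤ n+1)
            exact mul_le_mul_of_nonneg_right hcast (by positivity)
    calc ‖Q‖ ≤ ∑ i ∈ Finset.range (n+1),
          ‖P.coeff i • (∑ j ∈ Finset.range i, z^j • A^(i-1-j))‖ := norm_sum_le _ _
      _ ≤ ∑ i ∈ Finset.range (n+1), ‖P.coeff i‖ * ((n+1) * M^n) := by
          refine Finset.sum_le_sum ?_
          intro i hi
          rw [norm_smul (P.coeff i) (∑ j ∈ Finset.range i, z^j • A^(i-1-j))]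
          exact mul_le_mul_of_nonneg_left (hinner i hi) (norm_nonneg _)
      _ = (∑ i ∈ Finset.range (n+1), ‖P.coeff i‖) * ((n+1) * M^n) :=
          (Finset.sum_mul _ _ _).symm
      _ ≤ K := by simp only [hK]; nlinarith [mul_assoc (∑ i ∈ Finset.range (n+1), ‖P.coeff i‖) ((n:ℝ)+1) (M^n)]
  -- main case analysis
  by_cases hc : P.eval z = 0
  · have hzr : z ∈ P.roots := by
      rw [Polynomial.mem_roots hP.ne_zero]
      exact hc
    exact ⟨z, hroots z hzr, by
      simp only [dist_self]
      exact mul_pos (Real.rpow_pos_of_pos hKpos _) (Real.rpow_pos_of_pos hε _)⟩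
  · have hU : IsUnit (z • (1 : V →L[ℂ] V) - A) := by
      refine ⟨⟨z • 1 - A, (P.eval z)⁻¹ • Q, ?_, ?_⟩, rfl⟩
      · rw [mul_smul_comm, hQid, smul_smul, inv_mul_cancel₀ hc, one_smul]
      · rw [smul_mul_assoc, hQid', smul_smul, inv_mul_cancel₀ hc, one_smul]
    have hR : ‖Ring.inverse (z • (1 : V →L[ℂ] V) - A)‖ > 1 / ε :=
      hyp.resolve_left (not_not_intro hU)
    set R := Ring.inverse (z • (1 : V →L[ℂ] V) - A) with hRdef
    have h2 : (z • (1 : V →L[ℂ] V) - A) * ((P.eval z)⁻¹ • Q) = 1 := by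
      rw [mul_smul_comm, hQid, smul_smul, inv_mul_cancel₀ hc, one_smul]
    have hRQ : R = (P.eval z)⁻¹ • Q := by
      calc R = R * ((z • (1 : V →L[ℂ] V) - A) * ((P.eval z)⁻¹ • Q)) := by
              rw [h2, mul_one]
        _ = (R * (z • (1 : V →L[ℂ] V) - A)) * ((P.eval z)⁻¹ • Q) := by rw [mul_assoc]
        _ = (P.eval z)⁻¹ • Q := by rw [hRdef, Ring.inverse_mul_cancel _ hU, one_mul]
    have hRpos : 0 < ‖R‖ := lt_trans (by positivity) hR
    have hεR : 1 < ε * ‖R‖ := by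
      rw [gt_iff_lt, div_lt_iff₀ hε] at hR
      linarith [hR]
    have hzb : ‖z‖ ≤ ‖A‖ + 1 := by
      have h3 : (z • (1 : V →L[ℂ] V) - A) * R = 1 := Ring.mul_inverse_cancel _ hU
      have h4 : z • R = 1 + A * R := by
        have h4' : z • R - A * R = 1 := by rw [← h3, sub_mul, smul_mul_assoc, one_mul]
        exact eq_add_of_sub_eq h4'
      have h5 : ‖z‖ * ‖R‖ ≤ 1 + ‖A‖ * ‖R‖ := by
        calc ‖z‖ * ‖R‖ = ‖z • R‖ := (norm_smul z R).symm
          _ = ‖1 + A * R‖ := by rw [h4]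
          _ ≤ ‖(1 : V →L[ℂ] V)‖ + ‖A * R‖ := norm_add_le _ _
          _ ≤ 1 + ‖A‖ * ‖R‖ := by
              gcongr
              · exact ContinuousLinearMap.norm_id_le
              · exact norm_mul_le _ _
      nlinarith [norm_nonneg A, hRpos]
    have hQK' : ‖Q‖ ≤ K := hQKb hzb
    have hceK : ‖P.eval z‖ < ε * K := by
      have hcpos : 0 < ‖P.eval z‖ := norm_pos_iff.mpr hc
      have h5 : ‖R‖ = ‖P.eval z‖⁻¹ * ‖Q‖ := by
        rw [hRQ, norm_smul ((P.eval z)⁻¹) Q, norm_inv]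
      have h6 : 1/ε < ‖P.eval z‖⁻¹ * K := by
        rw [h5] at hR
        exact lt_of_lt_of_le hR (mul_le_mul_of_nonneg_left hQK' (by positivity))
      rw [inv_mul_eq_div, div_lt_div_iff₀ hε hcpos] at h6
      linarith
    have hsplit : P.Splits := IsAlgClosed.splits P
    have hprod : P = (P.roots.map fun a => X - C a).prod :=
      hsplit.eq_prod_roots_of_monic hP
    have hcard : P.roots.card = n := by
      rw [← hdeg]; exact (Polynomial.splits_iff_card_roots).mp hsplit
    have hevalprod : ‖P.eval z‖₊ = (P.roots.map fun a => ‖z - a‖₊).prod := by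
      conv_lhs => rw [hprod]
      rw [Polynomial.eval_multiset_prod, Multiset.map_map, nnnorm_multiset_prod',
        Multiset.map_map]
      simp [Function.comp_def]
    obtain ⟨μ₀, hμ₀⟩ : ∃ μ, μ ∈ P.roots :=
      Multiset.card_pos_iff_exists_mem.mp (by rw [hcard]; exact hn)
    obtain ⟨w, hwmem, hwmin⟩ := P.roots.toFinset.exists_min_image (fun a => ‖z - a‖₊)
      ⟨μ₀, Multiset.mem_toFinset.mpr hμ₀⟩
    have hwroot : w ∈ P.roots := Multiset.mem_toFinset.mp hwmem
    have hpow : ‖z - w‖₊ ^ n ≤ ‖P.eval z‖₊ := by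
      rw [hevalprod, ← hcard, ← Multiset.card_map (fun a => ‖z - a‖₊) P.roots]
      refine Multiset.pow_card_le_prod ?_
      intro x hx
      obtain ⟨a, ha, rfl⟩ := Multiset.mem_map.mp hx
      exact hwmin a (Multiset.mem_toFinset.mpr ha)
    have hpowR : ‖z - w‖ ^ n ≤ ‖P.eval z‖ := by exact_mod_cast hpow
    have hlt : ‖z - w‖ ^ n < ε * K := lt_of_le_of_lt hpowR hceK
    have hεK : 0 < ε * K := mul_pos hε hKpos
    have hfinal : ‖z - w‖ < (ε * K) ^ ((1:ℝ)/n) := by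
      by_contra hcon
      push_neg at hcon
      have h6 : ε * K = ((ε * K) ^ ((1:ℝ)/n)) ^ n := by
        rw [← Real.rpow_natCast ((ε * K) ^ ((1:ℝ)/n)) n, ← Real.rpow_mul hεK.le, one_div,
          inv_mul_cancel₀ (by exact_mod_cast hn.ne' : (n:ℝ) ≠ 0), Real.rpow_one]
      have h7 := pow_le_pow_left₀ (Real.rpow_nonneg hεK.le _) hcon n
      rw [← h6] at h7
      linarith
    refine ⟨w, hroots w hwroot, ?_⟩
    rw [Complex.dist_eq]
    calc ‖z - w‖ < (ε * K) ^ ((1:ℝ)/n) := hfinal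
      _ = K ^ ((1:ℝ)/n) * ε ^ ((1:ℝ)/n) := by
          rw [Real.mul_rpow hε.le hKpos.le, mul_comm]
end Key
section Main
variable {V : Type*} [NormedAddCommGroup V] [NormedSpace ℂ V] [CompleteSpace V]

lemma mem_spec_of_eigvec (A : V →L[ℂ] V) (μ : ℂ) (x : V) (hx : x ≠ 0)
    (hAx : A x = μ • x) : μ ∈ spectrum ℂ A := by
  rw [spectrum.mem_iff]
  intro hu
  have he : (algebraMap ℂ (V →L[ℂ] V) μ - A) x = 0 := by
    rw [Algebra.algebraMap_eq_smul_one]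
    simp [ContinuousLinearMap.sub_apply, ContinuousLinearMap.smul_apply,
      ContinuousLinearMap.one_apply, hAx]
  obtain ⟨u, hu'⟩ := hu
  apply hx
  calc x = ((↑u⁻¹ * ↑u : V →L[ℂ] V)) x := by rw [u.inv_mul]; rfl
    _ = (↑u⁻¹ : V →L[ℂ] V) ((algebraMap ℂ (V →L[ℂ] V) μ - A) x) := by
        rw [ContinuousLinearMap.mul_apply, hu']
    _ = 0 := by rw [he, map_zero]

-- conversion of exponents
lemma exp_convert (A : V →L[ℂ] V) (n m : ℕ) (hn : 0 < n) (hnm : n ≤ m + 1)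
    (h : ∃ C > (0 : ℝ), ∀ ε : ℝ, 0 < ε → ε < 1 →
      ∀ z : ℂ,
        (¬ IsUnit (z • (1 : V →L[ℂ] V) - A) ∨
          ‖Ring.inverse (z • (1 : V →L[ℂ] V) - A)‖ > 1 / ε) →
        ∃ w ∈ spectrum ℂ A, dist z w < C * ε ^ ((1 : ℝ) / n)) :
    ∃ C > (0 : ℝ), ∃ ε₀ > (0 : ℝ), ∀ ε : ℝ, 0 < ε → ε < ε₀ →
      ∀ z : ℂ,
        (¬ IsUnit (z • (1 : V →L[ℂ] V) - A) ∨
          ‖Ring.inverse (z • (1 : V →L[ℂ] V) - A)‖ > 1 / ε) →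
        ∃ w ∈ spectrum ℂ A, dist z w < C * ε ^ ((1 : ℝ) / (m + 1)) := by
  obtain ⟨C, hC, hconc⟩ := h
  refine ⟨C, hC, 1, one_pos, ?_⟩
  intro ε hε hε1 z hyp
  obtain ⟨w, hw, hdist⟩ := hconc ε hε hε1 z hyp
  refine ⟨w, hw, lt_of_lt_of_le hdist ?_⟩
  refine mul_le_mul_of_nonneg_left ?_ hC.le
  apply Real.rpow_le_rpow_of_exponent_ge hε hε1.le
  have h1 : (0:ℝ) < (n:ℝ) := by exact_mod_cast hn
  have h2 : (n:ℝ) ≤ (m:ℝ) + 1 := by exact_mod_cast hnm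
  rw [div_le_div_iff₀ (by positivity) h1]
  nlinarith
end Main

theorem pseudospectrum_finite_rank_operator
    {V : Type*} [NormedAddCommGroup V] [InnerProductSpace ℂ V] [CompleteSpace V]
    (A : V →L[ℂ] V) (m : ℕ)
    (hfin : FiniteDimensional ℂ (LinearMap.range (A : V →ₗ[ℂ] V)))
    (hm : Module.finrank ℂ (LinearMap.range (A : V →ₗ[ℂ] V)) = m) :
    ∃ C > (0 : ℝ), ∃ ε₀ > (0 : ℝ), ∀ ε : ℝ, 0 < ε → ε < ε₀ →
      ∀ z : ℂ,
        (¬ IsUnit (z • (1 : V →L[ℂ] V) - A) ∨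
          ‖Ring.inverse (z • (1 : V →L[ℂ] V) - A)‖ > 1 / ε) →
        ∃ w ∈ spectrum ℂ A, dist z w < C * ε ^ ((1 : ℝ) / (m + 1)) := by
  classical
  by_cases hUA : IsUnit A
  · -- A invertible, so V is finite dimensional of rank m
    have hsurj : Function.Surjective A := by
      obtain ⟨u, hu⟩ := hUA
      intro v
      refine ⟨(↑u⁻¹ : V →L[ℂ] V) v, ?_⟩
      calc A ((↑u⁻¹ : V →L[ℂ] V) v) = ((↑u * ↑u⁻¹ : V →L[ℂ] V)) v := by
            rw [ContinuousLinearMap.mul_apply, hu]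
        _ = v := by rw [u.mul_inv]; rfl
    have htop : LinearMap.range (A : V →ₗ[ℂ] V) = ⊤ :=
      LinearMap.range_eq_top.mpr hsurj
    haveI hFD : FiniteDimensional ℂ V := by
      rw [htop] at hfin
      exact (Submodule.topEquiv : (⊤ : Submodule ℂ V) ≃ₗ[ℂ] V).finiteDimensional
    have hfV : Module.finrank ℂ V = m := by rw [← hm, htop, finrank_top]
    by_cases hm0 : m = 0
    · haveI : Subsingleton V := by
        rw [← Module.finrank_zero_iff (R := ℂ)]
        rw [hfV, hm0]
      refine ⟨1, one_pos, 1, one_pos, ?_⟩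
      intro ε hε hε1 z hyp
      exfalso
      rcases hyp with h | h
      · exact h (by rw [Subsingleton.elim (z • (1 : V →L[ℂ] V) - A) 1]; exact isUnit_one)
      · rw [Subsingleton.elim (Ring.inverse (z • (1 : V →L[ℂ] V) - A)) (0 : V →L[ℂ] V),
          norm_zero] at h
        have : (0:ℝ) < 1/ε := by positivity
        linarith
    · set f : Module.End ℂ V := (A : V →ₗ[ℂ] V) with hf
      have hint : IsIntegral ℂ f := LinearMap.isIntegral f
      set P := minpoly ℂ f with hPdef
      have hPmon : P.Monic := minpoly.monic hint
      have hdle : P.natDegree ≤ m := by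
        have h1 := Polynomial.natDegree_le_of_dvd (LinearMap.minpoly_dvd_charpoly f)
          (LinearMap.charpoly_monic f).ne_zero
        rwa [LinearMap.charpoly_natDegree, hfV] at h1
      haveI : Nontrivial V := by
        rw [← Module.finrank_pos_iff (R := ℂ), hfV]
        omega
      have hdpos : 0 < P.natDegree := minpoly.natDegree_pos hint
      have hpowAP : ∀ (k : ℕ) (v : V), (A^k) v = (f^k) v := by
        intro k
        induction k with
        | zero => intro v; rfl
        | succ k ih =>
            intro v
            rw [pow_succ, pow_succ, ContinuousLinearMap.mul_apply, Module.End.mul_apply]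
            exact ih (A v)
      have hPA : Polynomial.aeval A P = 0 := by
        ext v
        have h1 : (Polynomial.aeval A P) v = (Polynomial.aeval f P) v := by
          rw [Polynomial.aeval_eq_sum_range (x := A), Polynomial.aeval_eq_sum_range (x := f)]
          rw [ContinuousLinearMap.sum_apply, LinearMap.sum_apply]
          refine Finset.sum_congr rfl ?_
          intro i _
          rw [ContinuousLinearMap.smul_apply, LinearMap.smul_apply, hpowAP]
        rw [h1, minpoly.aeval]
        rfl
      have hroots : ∀ μ ∈ P.roots, μ ∈ spectrum ℂ A := by
        intro μ hμ
        have hisr : P.IsRoot μ := (Polynomial.mem_roots hPmon.ne_zero).mp hμ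
        have heig : f.HasEigenvalue μ := Module.End.hasEigenvalue_of_isRoot hisr
        obtain ⟨v, hv⟩ := heig.exists_hasEigenvector
        exact mem_spec_of_eigvec A μ v hv.2 hv.apply_eq_smul
      exact exp_convert A P.natDegree m hdpos (by omega)
        (key_lemma A P P.natDegree hPmon rfl hdpos hPA hroots)
  · -- A not invertible
    haveI := hfin
    set W := LinearMap.range (A : V →ₗ[ℂ] V) with hW
    have hmemW : ∀ x : V, (A : V →ₗ[ℂ] V) x ∈ W := fun x => LinearMap.mem_range_self _ x
    set f : Module.End ℂ W := (A : V →ₗ[ℂ] V).restrict (fun x _ => hmemW x) with hf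
    have hfapp : ∀ w : W, (f w : V) = A (w : V) := fun w => rfl
    have hint : IsIntegral ℂ f := LinearMap.isIntegral f
    set p := minpoly ℂ f with hpdef
    have hpmon : p.Monic := minpoly.monic hint
    have hpdle : p.natDegree ≤ m := by
      have h1 := Polynomial.natDegree_le_of_dvd (LinearMap.minpoly_dvd_charpoly f)
        (LinearMap.charpoly_monic f).ne_zero
      rwa [LinearMap.charpoly_natDegree, hm] at h1
    set P := p * X with hPdef
    have hPmon : P.Monic := hpmon.mul monic_X
    have hPdeg : P.natDegree = p.natDegree + 1 := by
      rw [hPdef, Polynomial.natDegree_mul hpmon.ne_zero Polynomial.X_ne_zero,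
        Polynomial.natDegree_X]
    have hpowAW : ∀ (k : ℕ) (w : W), (A^k) (w : V) = (((f^k) w : W) : V) := by
      intro k
      induction k with
      | zero => intro w; rfl
      | succ k ih =>
          intro w
          rw [pow_succ', pow_succ', ContinuousLinearMap.mul_apply, Module.End.mul_apply,
            ih w]
          exact (hfapp _).symm
    have hAW : ∀ (r : ℂ[X]) (w : W),
        (Polynomial.aeval A r) (w : V) = (((Polynomial.aeval f r) w : W) : V) := by
      intro r w
      rw [Polynomial.aeval_eq_sum_range (x := A), Polynomial.aeval_eq_sum_range (x := f)]
      rw [ContinuousLinearMap.sum_apply, LinearMap.sum_apply, Submodule.coe_sum]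
      refine Finset.sum_congr rfl ?_
      intro i _
      rw [ContinuousLinearMap.smul_apply, LinearMap.smul_apply, SetLike.val_smul, hpowAW]
    have hPA : Polynomial.aeval A P = 0 := by
      ext v
      rw [hPdef, map_mul, Polynomial.aeval_X]
      rw [ContinuousLinearMap.mul_apply]
      have hv : (A v : V) = ((⟨(A : V →ₗ[ℂ] V) v, hmemW v⟩ : W) : V) := rfl
      rw [hv, hAW p]
      rw [hpdef, minpoly.aeval]
      rfl
    have hroots : ∀ μ ∈ P.roots, μ ∈ spectrum ℂ A := by
      intro μ hμ
      rw [hPdef, Polynomial.roots_mul (mul_ne_zero hpmon.ne_zero Polynomial.X_ne_zero),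
        Multiset.mem_add] at hμ
      rcases hμ with hμ | hμ
      · have hisr : p.IsRoot μ := (Polynomial.mem_roots hpmon.ne_zero).mp hμ
        have heig : f.HasEigenvalue μ := Module.End.hasEigenvalue_of_isRoot hisr
        obtain ⟨w, hw⟩ := heig.exists_hasEigenvector
        refine mem_spec_of_eigvec A μ (w : V) ?_ ?_
        · intro h
          exact hw.2 (by exact_mod_cast Subtype.coe_injective (h.trans rfl) )
        · have h1 : f w = μ • w := hw.apply_eq_smul
          calc A (w : V) = (f w : V) := (hfapp w).symm
            _ = ((μ • w : W) : V) := by rw [h1]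
            _ = μ • (w : V) := rfl
      · rw [Polynomial.roots_X, Multiset.mem_singleton] at hμ
        subst hμ
        exact spectrum.zero_mem (R := ℂ) hUA
    exact exp_convert A (p.natDegree + 1) m (Nat.succ_pos _) (by omega)
      (key_lemma A P (p.natDegree + 1) hPmon hPdeg (Nat.succ_pos _) hPA hroots)
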